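/- Let n < m be natural numbers, U an open subset of ℝⁿ, and F : U → ℝᵐ a continuously differentiable (C¹) function. Then the image F[U] has Lebesgue measure 0 in ℝᵐ. -/

import Mathlib

open MeasureTheory

/-- If `n < m`, `U ⊆ ℝⁿ` is open and `F : U → ℝᵐ` is `C¹`, then the image `F[U]`
has Lebesgue measure zero in `ℝᵐ`. -/
theorem measure_image_eq_zero_of_contDiffOn_of_lt
    (n m : ℕ) (hnm : n < m) (U : Set (Fin n → ℝ)) (hU : IsOpen U)
    (F : (Fin n → ℝ) → (Fin m → ℝ)) (hF : ContDiffOn ℝ 1 F U) :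
    volume (F '' U) = 0 := by
  -- projection ℝᵐ → ℝⁿ
  set proj : (Fin m → ℝ) →L[ℝ] (Fin n → ℝ) :=
    ContinuousLinearMap.pi fun j => ContinuousLinearMap.proj (Fin.castLE hnm.le j) with hproj
  -- embedding ℝⁿ → ℝᵐ (pad with zeros)
  set emb : (Fin n → ℝ) → (Fin m → ℝ) :=
    fun u i => if h : (i : ℕ) < n then u ⟨i, h⟩ else 0 with hemb
  have hpe : ∀ u, proj (emb u) = u := by
    intro u; ext j
    simp [hproj, hemb, j.isLt]
  set G : (Fin m → ℝ) → (Fin m → ℝ) := F ∘ proj with hG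
  have himg : F '' U = G '' (emb '' U) := by
    rw [Set.image_image]
    apply Set.image_congr
    intro u _
    simp [hG, hpe u]
  rw [himg]
  -- emb '' U is contained in the hyperplane {x | x ⟨n, hnm⟩ = 0}, a strict submodule
  have hV0 : volume (emb '' U) = 0 := by
    have hsub : emb '' U ⊆ (LinearMap.ker (LinearMap.proj (⟨n, hnm⟩ : Fin m) :
        (Fin m → ℝ) →ₗ[ℝ] ℝ) : Set (Fin m → ℝ)) := by
      rintro _ ⟨u, -, rfl⟩
      simp [hemb, LinearMap.mem_ker]
    refine measure_mono_null hsub (Measure.addHaar_submodule _ _ ?_)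
    intro h
    have : (fun i : Fin m => (1 : ℝ)) ∈ LinearMap.ker (LinearMap.proj (⟨n, hnm⟩ : Fin m) :
        (Fin m → ℝ) →ₗ[ℝ] ℝ) := h ▸ Submodule.mem_top
    simp [LinearMap.mem_ker] at this
  have hdiff : DifferentiableOn ℝ G (emb '' U) := by
    apply (hF.differentiableOn one_ne_zero).comp proj.differentiable.differentiableOn
    rintro _ ⟨u, hu, rfl⟩
    simpa [hpe u] using hu
  exact addHaar_image_eq_zero_of_differentiableOn_of_addHaar_eq_zero volume hdiff hV0
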